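/- At the equilibrium E₅ = (0, (c−1)/(ε−1), (ε−c)/(ε−1), 0), with ε<c<1, the Jacobian of the reduced replicator system has eigenvalues (c−ε)/(ε−1), (ε−c)/(ε−1), and (c−1)(c−ε)/(ε−1); the first two have opposite signs, so E₅ is unstable. -/

import Mathlib

noncomputable section

set_option maxHeartbeats 1000000

/-- Reduced replicator vector field of the reputation-based voluntary Prisoner's
Dilemma: state `p = (x, y, z)` with `w = 1 - x - y - z` eliminated; payoffs
`Π_C = x+z`, `Π_D = bx`, `Π_CE = (x+z)(1-c)+(y+w)(ε-c)`,
`Π_DE = x(b-c)-zc+(y+w)(ε-c)`; dynamics `ẋ = x(Π_C − Π̄)`, etc. -/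
def repField (b c ε : ℝ) (p : Fin 3 → ℝ) : Fin 3 → ℝ :=
  let x := p 0
  let y := p 1
  let z := p 2
  let w := 1 - x - y - z
  let PC := x + z
  let PD := b * x
  let PCE := (x + z) * (1 - c) + (y + w) * (ε - c)
  let PDE := x * (b - c) - z * c + (y + w) * (ε - c)
  let Pbar := x * PC + y * PD + z * PCE + w * PDE
  ![x * (PC - Pbar), y * (PD - Pbar), z * (PCE - Pbar)]

/-- Jacobian matrix of the reduced replicator field at `p`,
entry `(i, j)` being the partial derivative of the `i`-th component
with respect to the `j`-th variable. -/
def jac (b c ε : ℝ) (p : Fin 3 → ℝ) : Matrix (Fin 3) (Fin 3) ℝ :=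
  fun i j => deriv (fun t : ℝ => repField b c ε (Function.update p j t) i) (p j)

lemma deriv_cubic (a₃ a₂ a₁ a₀ t : ℝ) :
    deriv (fun s : ℝ => a₃*s^3 + a₂*s^2 + a₁*s + a₀) t = 3*a₃*t^2 + 2*a₂*t + a₁ := by
  have h3 : HasDerivAt (fun s : ℝ => s^3) (3*t^2) t := by simpa using hasDerivAt_pow 3 t
  have h2 : HasDerivAt (fun s : ℝ => s^2) (2*t) t := by simpa using hasDerivAt_pow 2 t
  have h : HasDerivAt (fun s : ℝ => a₃*s^3 + a₂*s^2 + a₁*s + a₀)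
      (a₃*(3*t^2) + a₂*(2*t) + a₁*1) t :=
    (((h3.const_mul a₃).add (h2.const_mul a₂)).add ((hasDerivAt_id t).const_mul a₁)).add_const a₀
  rw [h.deriv]; ring

lemma jac_gen (b c ε : ℝ) (p : Fin 3 → ℝ) :
    jac b c ε p = ![
    ![(p 2) - (p 2)^2 + 2*(p 0) - 4*(p 0)*(p 2) - 3*(p 0)^2 - ε + ε*(p 2) + ε*(p 1) - ε*(p 1)*(p 2) + 4*ε*(p 0) - 2*ε*(p 0)*(p 2) - 2*ε*(p 0)*(p 1) - 3*ε*(p 0)^2 + c - c*(p 1) - 2*c*(p 0) - 2*b*(p 0) + 2*b*(p 0)*(p 2) + 3*b*(p 0)^2,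
      ε*(p 0) - ε*(p 0)*(p 2) - ε*(p 0)^2 - c*(p 0),
      (p 0) - 2*(p 0)*(p 2) - 2*(p 0)^2 + ε*(p 0) - ε*(p 0)*(p 1) - ε*(p 0)^2 + b*(p 0)^2],
    ![-2*(p 1)*(p 2) - 2*(p 0)*(p 1) + 2*ε*(p 1) - ε*(p 1)*(p 2) - ε*(p 1)^2 - 2*ε*(p 0)*(p 1) - c*(p 1) + b*(p 1)*(p 2) + 2*b*(p 0)*(p 1),
      -(p 2)^2 - 2*(p 0)*(p 2) - (p 0)^2 - ε + ε*(p 2) + 2*ε*(p 1) - 2*ε*(p 1)*(p 2) + 2*ε*(p 0) - ε*(p 0)*(p 2) - 2*ε*(p 0)*(p 1) - ε*(p 0)^2 + c - 2*c*(p 1) - c*(p 0) + b*(p 0)*(p 2) + b*(p 0)^2,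
      -2*(p 1)*(p 2) - 2*(p 0)*(p 1) + ε*(p 1) - ε*(p 1)^2 - ε*(p 0)*(p 1) + b*(p 0)*(p 1)],
    ![(p 2) - 2*(p 2)^2 - 2*(p 0)*(p 2) + ε*(p 2) - ε*(p 2)^2 - ε*(p 1)*(p 2) - 2*ε*(p 0)*(p 2) - c*(p 2) - b*(p 2) + b*(p 2)^2 + 2*b*(p 0)*(p 2),
      ε*(p 2) - ε*(p 2)^2 - ε*(p 0)*(p 2) - c*(p 2),
      2*(p 2) - 3*(p 2)^2 + (p 0) - 4*(p 0)*(p 2) - (p 0)^2 + ε*(p 1) - 2*ε*(p 1)*(p 2) + ε*(p 0) - 2*ε*(p 0)*(p 2) - ε*(p 0)*(p 1) - ε*(p 0)^2 - c*(p 1) - c*(p 0) - b*(p 0) + 2*b*(p 0)*(p 2) + b*(p 0)^2]] := by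
  have h00 : deriv (fun t : ℝ => repField b c ε (Function.update p 0 t) 0) (p 0)
      = (p 2) - (p 2)^2 + 2*(p 0) - 4*(p 0)*(p 2) - 3*(p 0)^2 - ε + ε*(p 2) + ε*(p 1) - ε*(p 1)*(p 2) + 4*ε*(p 0) - 2*ε*(p 0)*(p 2) - 2*ε*(p 0)*(p 1) - 3*ε*(p 0)^2 + c - c*(p 1) - 2*c*(p 0) - 2*b*(p 0) + 2*b*(p 0)*(p 2) + 3*b*(p 0)^2 := by
    have hf : (fun t : ℝ => repField b c ε (Function.update p 0 t) 0)
        = fun t : ℝ => (-1 - ε + b)*t^3 + (1 - 2*(p 2) + 2*ε - ε*(p 2) - ε*(p 1) - c - b + b*(p 2))*t^2 + ((p 2) - (p 2)^2 - ε + ε*(p 2) + ε*(p 1) - ε*(p 1)*(p 2) + c - c*(p 1))*t + ((0:ℝ)) := by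
      funext t
      simp only [repField, Function.update_apply, Matrix.cons_val_zero, Matrix.cons_val_one,
        Matrix.head_cons, Matrix.cons_val_two, Matrix.tail_cons,
        show ((0:Fin 3) = 0) = True from by decide,
        show ((1:Fin 3) = 0) = False from by decide,
        show ((2:Fin 3) = 0) = False from by decide, if_true, if_false]
      ring
    rw [hf, deriv_cubic]; ring
  have h01 : deriv (fun t : ℝ => repField b c ε (Function.update p 1 t) 0) (p 1)
      = ε*(p 0) - ε*(p 0)*(p 2) - ε*(p 0)^2 - c*(p 0) := by
    have hf : (fun t : ℝ => repField b c ε (Function.update p 1 t) 0)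
        = fun t : ℝ => ((0:ℝ))*t^3 + ((0:ℝ))*t^2 + (ε*(p 0) - ε*(p 0)*(p 2) - ε*(p 0)^2 - c*(p 0))*t + ((p 0)*(p 2) - (p 0)*(p 2)^2 + (p 0)^2 - 2*(p 0)^2*(p 2) - (p 0)^3 - ε*(p 0) + ε*(p 0)*(p 2) + 2*ε*(p 0)^2 - ε*(p 0)^2*(p 2) - ε*(p 0)^3 + c*(p 0) - c*(p 0)^2 - b*(p 0)^2 + b*(p 0)^2*(p 2) + b*(p 0)^3) := by
      funext t
      simp only [repField, Function.update_apply, Matrix.cons_val_zero, Matrix.cons_val_one,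
        Matrix.head_cons, Matrix.cons_val_two, Matrix.tail_cons,
        show ((0:Fin 3) = 1) = False from by decide,
        show ((1:Fin 3) = 1) = True from by decide,
        show ((2:Fin 3) = 1) = False from by decide, if_true, if_false]
      ring
    rw [hf, deriv_cubic]; ring
  have h02 : deriv (fun t : ℝ => repField b c ε (Function.update p 2 t) 0) (p 2)
      = (p 0) - 2*(p 0)*(p 2) - 2*(p 0)^2 + ε*(p 0) - ε*(p 0)*(p 1) - ε*(p 0)^2 + b*(p 0)^2 := by
    have hf : (fun t : ℝ => repField b c ε (Function.update p 2 t) 0)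
        = fun t : ℝ => ((0:ℝ))*t^3 + (-(p 0))*t^2 + ((p 0) - 2*(p 0)^2 + ε*(p 0) - ε*(p 0)*(p 1) - ε*(p 0)^2 + b*(p 0)^2)*t + ((p 0)^2 - (p 0)^3 - ε*(p 0) + ε*(p 0)*(p 1) + 2*ε*(p 0)^2 - ε*(p 0)^2*(p 1) - ε*(p 0)^3 + c*(p 0) - c*(p 0)*(p 1) - c*(p 0)^2 - b*(p 0)^2 + b*(p 0)^3) := by
      funext t
      simp only [repField, Function.update_apply, Matrix.cons_val_zero, Matrix.cons_val_one,
        Matrix.head_cons, Matrix.cons_val_two, Matrix.tail_cons,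
        show ((0:Fin 3) = 2) = False from by decide,
        show ((1:Fin 3) = 2) = False from by decide,
        show ((2:Fin 3) = 2) = True from by decide, if_true, if_false]
      ring
    rw [hf, deriv_cubic]; ring
  have h10 : deriv (fun t : ℝ => repField b c ε (Function.update p 0 t) 1) (p 0)
      = -2*(p 1)*(p 2) - 2*(p 0)*(p 1) + 2*ε*(p 1) - ε*(p 1)*(p 2) - ε*(p 1)^2 - 2*ε*(p 0)*(p 1) - c*(p 1) + b*(p 1)*(p 2) + 2*b*(p 0)*(p 1) := by
    have hf : (fun t : ℝ => repField b c ε (Function.update p 0 t) 1)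
        = fun t : ℝ => ((0:ℝ))*t^3 + (-(p 1) - ε*(p 1) + b*(p 1))*t^2 + (-2*(p 1)*(p 2) + 2*ε*(p 1) - ε*(p 1)*(p 2) - ε*(p 1)^2 - c*(p 1) + b*(p 1)*(p 2))*t + (-(p 1)*(p 2)^2 - ε*(p 1) + ε*(p 1)*(p 2) + ε*(p 1)^2 - ε*(p 1)^2*(p 2) + c*(p 1) - c*(p 1)^2) := by
      funext t
      simp only [repField, Function.update_apply, Matrix.cons_val_zero, Matrix.cons_val_one,
        Matrix.head_cons, Matrix.cons_val_two, Matrix.tail_cons,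
        show ((0:Fin 3) = 0) = True from by decide,
        show ((1:Fin 3) = 0) = False from by decide,
        show ((2:Fin 3) = 0) = False from by decide, if_true, if_false]
      ring
    rw [hf, deriv_cubic]; ring
  have h11 : deriv (fun t : ℝ => repField b c ε (Function.update p 1 t) 1) (p 1)
      = -(p 2)^2 - 2*(p 0)*(p 2) - (p 0)^2 - ε + ε*(p 2) + 2*ε*(p 1) - 2*ε*(p 1)*(p 2) + 2*ε*(p 0) - ε*(p 0)*(p 2) - 2*ε*(p 0)*(p 1) - ε*(p 0)^2 + c - 2*c*(p 1) - c*(p 0) + b*(p 0)*(p 2) + b*(p 0)^2 := by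
    have hf : (fun t : ℝ => repField b c ε (Function.update p 1 t) 1)
        = fun t : ℝ => ((0:ℝ))*t^3 + (ε - ε*(p 2) - ε*(p 0) - c)*t^2 + (-(p 2)^2 - 2*(p 0)*(p 2) - (p 0)^2 - ε + ε*(p 2) + 2*ε*(p 0) - ε*(p 0)*(p 2) - ε*(p 0)^2 + c - c*(p 0) + b*(p 0)*(p 2) + b*(p 0)^2)*t + ((0:ℝ)) := by
      funext t
      simp only [repField, Function.update_apply, Matrix.cons_val_zero, Matrix.cons_val_one,
        Matrix.head_cons, Matrix.cons_val_two, Matrix.tail_cons,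
        show ((0:Fin 3) = 1) = False from by decide,
        show ((1:Fin 3) = 1) = True from by decide,
        show ((2:Fin 3) = 1) = False from by decide, if_true, if_false]
      ring
    rw [hf, deriv_cubic]; ring
  have h12 : deriv (fun t : ℝ => repField b c ε (Function.update p 2 t) 1) (p 2)
      = -2*(p 1)*(p 2) - 2*(p 0)*(p 1) + ε*(p 1) - ε*(p 1)^2 - ε*(p 0)*(p 1) + b*(p 0)*(p 1) := by
    have hf : (fun t : ℝ => repField b c ε (Function.update p 2 t) 1)
        = fun t : ℝ => ((0:ℝ))*t^3 + (-(p 1))*t^2 + (-2*(p 0)*(p 1) + ε*(p 1) - ε*(p 1)^2 - ε*(p 0)*(p 1) + b*(p 0)*(p 1))*t + (-(p 0)^2*(p 1) - ε*(p 1) + ε*(p 1)^2 + 2*ε*(p 0)*(p 1) - ε*(p 0)*(p 1)^2 - ε*(p 0)^2*(p 1) + c*(p 1) - c*(p 1)^2 - c*(p 0)*(p 1) + b*(p 0)^2*(p 1)) := by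
      funext t
      simp only [repField, Function.update_apply, Matrix.cons_val_zero, Matrix.cons_val_one,
        Matrix.head_cons, Matrix.cons_val_two, Matrix.tail_cons,
        show ((0:Fin 3) = 2) = False from by decide,
        show ((1:Fin 3) = 2) = False from by decide,
        show ((2:Fin 3) = 2) = True from by decide, if_true, if_false]
      ring
    rw [hf, deriv_cubic]; ring
  have h20 : deriv (fun t : ℝ => repField b c ε (Function.update p 0 t) 2) (p 0)
      = (p 2) - 2*(p 2)^2 - 2*(p 0)*(p 2) + ε*(p 2) - ε*(p 2)^2 - ε*(p 1)*(p 2) - 2*ε*(p 0)*(p 2) - c*(p 2) - b*(p 2) + b*(p 2)^2 + 2*b*(p 0)*(p 2) := by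
    have hf : (fun t : ℝ => repField b c ε (Function.update p 0 t) 2)
        = fun t : ℝ => ((0:ℝ))*t^3 + (-(p 2) - ε*(p 2) + b*(p 2))*t^2 + ((p 2) - 2*(p 2)^2 + ε*(p 2) - ε*(p 2)^2 - ε*(p 1)*(p 2) - c*(p 2) - b*(p 2) + b*(p 2)^2)*t + ((p 2)^2 - (p 2)^3 + ε*(p 1)*(p 2) - ε*(p 1)*(p 2)^2 - c*(p 1)*(p 2)) := by
      funext t
      simp only [repField, Function.update_apply, Matrix.cons_val_zero, Matrix.cons_val_one,
        Matrix.head_cons, Matrix.cons_val_two, Matrix.tail_cons,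
        show ((0:Fin 3) = 0) = True from by decide,
        show ((1:Fin 3) = 0) = False from by decide,
        show ((2:Fin 3) = 0) = False from by decide, if_true, if_false]
      ring
    rw [hf, deriv_cubic]; ring
  have h21 : deriv (fun t : ℝ => repField b c ε (Function.update p 1 t) 2) (p 1)
      = ε*(p 2) - ε*(p 2)^2 - ε*(p 0)*(p 2) - c*(p 2) := by
    have hf : (fun t : ℝ => repField b c ε (Function.update p 1 t) 2)
        = fun t : ℝ => ((0:ℝ))*t^3 + ((0:ℝ))*t^2 + (ε*(p 2) - ε*(p 2)^2 - ε*(p 0)*(p 2) - c*(p 2))*t + ((p 2)^2 - (p 2)^3 + (p 0)*(p 2) - 2*(p 0)*(p 2)^2 - (p 0)^2*(p 2) + ε*(p 0)*(p 2) - ε*(p 0)*(p 2)^2 - ε*(p 0)^2*(p 2) - c*(p 0)*(p 2) - b*(p 0)*(p 2) + b*(p 0)*(p 2)^2 + b*(p 0)^2*(p 2)) := by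
      funext t
      simp only [repField, Function.update_apply, Matrix.cons_val_zero, Matrix.cons_val_one,
        Matrix.head_cons, Matrix.cons_val_two, Matrix.tail_cons,
        show ((0:Fin 3) = 1) = False from by decide,
        show ((1:Fin 3) = 1) = True from by decide,
        show ((2:Fin 3) = 1) = False from by decide, if_true, if_false]
      ring
    rw [hf, deriv_cubic]; ring
  have h22 : deriv (fun t : ℝ => repField b c ε (Function.update p 2 t) 2) (p 2)
      = 2*(p 2) - 3*(p 2)^2 + (p 0) - 4*(p 0)*(p 2) - (p 0)^2 + ε*(p 1) - 2*ε*(p 1)*(p 2) + ε*(p 0) - 2*ε*(p 0)*(p 2) - ε*(p 0)*(p 1) - ε*(p 0)^2 - c*(p 1) - c*(p 0) - b*(p 0) + 2*b*(p 0)*(p 2) + b*(p 0)^2 := by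
    have hf : (fun t : ℝ => repField b c ε (Function.update p 2 t) 2)
        = fun t : ℝ => (-1)*t^3 + (1 - 2*(p 0) - ε*(p 1) - ε*(p 0) + b*(p 0))*t^2 + ((p 0) - (p 0)^2 + ε*(p 1) + ε*(p 0) - ε*(p 0)*(p 1) - ε*(p 0)^2 - c*(p 1) - c*(p 0) - b*(p 0) + b*(p 0)^2)*t + ((0:ℝ)) := by
      funext t
      simp only [repField, Function.update_apply, Matrix.cons_val_zero, Matrix.cons_val_one,
        Matrix.head_cons, Matrix.cons_val_two, Matrix.tail_cons,
        show ((0:Fin 3) = 2) = False from by decide,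
        show ((1:Fin 3) = 2) = False from by decide,
        show ((2:Fin 3) = 2) = True from by decide, if_true, if_false]
      ring
    rw [hf, deriv_cubic]; ring
  funext i j
  fin_cases i <;> fin_cases j <;> simp only [jac, Fin.mk_zero, Fin.mk_one, Fin.isValue] <;>
    first
      | simpa using h00 | simpa using h01 | simpa using h02
      | simpa using h10 | simpa using h11 | simpa using h12
      | simpa using h20 | simpa using h21 | simpa using h22

lemma jac_E5 (b c ε : ℝ) (hε1 : ε - 1 ≠ 0) :
    jac b c ε ![0, (c - 1) / (ε - 1), (ε - c) / (ε - 1)]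
      = ![![(ε-c)/(ε-1), 0, 0],
          ![(c-1)/(ε-1)*(b - (ε-c)/(ε-1)*(3-ε) - (c-1)/(ε-1)*b), -((c-1)/(ε-1)*((ε-c)/(ε-1))), -((c-1)/(ε-1)*((ε-c)/(ε-1))*(2-ε))],
          ![(ε-c)/(ε-1)*(1-ε - (ε-c)/(ε-1)*(3-ε) - (c-1)/(ε-1)*b), -(((ε-c)/(ε-1))^2), (ε-c)/(ε-1)*(1-ε - (ε-c)/(ε-1)*(2-ε))]] := by
  rw [jac_gen]
  funext i j
  fin_cases i <;> fin_cases j <;>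
    simp only [Fin.mk_zero, Fin.mk_one, Fin.isValue, Matrix.cons_val_zero,
      Matrix.cons_val_one, Matrix.head_cons, Matrix.cons_val_two, Matrix.tail_cons,
      Matrix.cons_val, Fin.reduceFinMk, Matrix.cons_val', Matrix.empty_val', Matrix.cons_val_fin_one, Matrix.head_fin_const] <;>
    field_simp <;> ring

open Polynomial in
/-- At the equilibrium `E₅ = (0, (c−1)/(ε−1), (ε−c)/(ε−1), 0)` with
`ε < c < 1`, the Jacobian of the reduced replicator system has eigenvalues
`(c−ε)/(ε−1)`, `(ε−c)/(ε−1)` and `(c−1)(c−ε)/(ε−1)`; the first two have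
opposite signs, so `E₅` is unstable (it has a positive eigenvalue). -/
theorem E5_unstable (b c ε : ℝ) (hb1 : 1 < b) (hb2 : b ≤ 2)
    (hc0 : 0 < c) (hc1 : c < 1) (he0 : 0 < ε) (he1 : ε < 1) (hec : ε < c) :
    (jac b c ε ![0, (c - 1) / (ε - 1), (ε - c) / (ε - 1)]).charpoly
      = (X - C ((c - ε) / (ε - 1))) * (X - C ((ε - c) / (ε - 1)))
        * (X - C ((c - 1) * (c - ε) / (ε - 1))) ∧
    ((c - ε) / (ε - 1)) * ((ε - c) / (ε - 1)) < 0 ∧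
    ∃ lam : ℝ, 0 < lam ∧ ∃ v : Fin 3 → ℝ, v ≠ 0 ∧
      (jac b c ε ![0, (c - 1) / (ε - 1), (ε - c) / (ε - 1)]).mulVec v
        = lam • v := by
  have hε1 : ε - 1 ≠ 0 := by linarith
  have hM := jac_E5 b c ε hε1
  have hzpos : 0 < (ε - c) / (ε - 1) := div_pos_of_neg_of_neg (by linarith) (by linarith)
  have hypos : 0 < (c - 1) / (ε - 1) := div_pos_of_neg_of_neg (by linarith) (by linarith)
  refine ⟨?_, ?_, ?_⟩
  · rw [Matrix.charpoly, Matrix.det_fin_three]; simp only [Matrix.charmatrix_apply]; rw [hM]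
    apply Polynomial.funext
    intro r
    simp [Matrix.charmatrix_apply, Matrix.one_apply]
    field_simp
    ring
  · exact mul_neg_of_neg_of_pos (div_neg_of_pos_of_neg (by linarith) (by linarith)) hzpos
  · refine ⟨(1-c)*((ε-c)/(ε-1)), mul_pos (by linarith) hzpos,
      ![0, -((c-1)/(ε-1)*(2-ε)), 1-c+(c-1)/(ε-1)], ?_, ?_⟩
    · intro hv
      have h2 := congrFun hv 2
      simp only [Matrix.cons_val_two, Matrix.tail_cons, Matrix.head_cons, Pi.zero_apply] at h2
      linarith
    · rw [hM]
      funext i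
      fin_cases i <;>
        simp [Matrix.mulVec, dotProduct, Fin.sum_univ_three] <;>
        field_simp <;> ring
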